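/- arXiv:2003.06369 — 3 statements merged into one kernel-verified Lean document; each statement's English description precedes it below -/
import Mathlib

section
/- Let f be L-smooth and μ-gradient dominated on H and x ∈ H, g ∈ H with g ≠ 0 and ∇f(x) ≠ 0. Set η = ⟨−∇f(x), g⟩/(‖∇f(x)‖‖g‖) and γ = η‖∇f(x)‖/(L‖g‖), and assume γ ≤ 1. Then for any set C with x, x + γ g ∈ C and any m ≤ inf_C f with f minorized appropriately, f(x + γ g) − min_C f ≤ (1 − η² μ/L)(f(x) − min_C f). -/
/-- Short-step contraction: for an L-smooth, μ-gradient dominated function, a step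
of size γ = η‖∇f(x)‖/(L‖g‖) ≤ 1 along g contracts the primal gap by (1 - η²μ/L). -/
theorem short_step_contraction
    {H : Type*} [NormedAddCommGroup H] [InnerProductSpace ℝ H]
    (f : H → ℝ) (f' : H → H) (L μ : ℝ) (hL : 0 < L) (hμ : 0 < μ)
    (hsmooth : ∀ a b : H, f b - f a - inner ℝ (f' a) (b - a) ≤ (L / 2) * ‖b - a‖ ^ 2)
    (infH : ℝ)
    (hdom : ∀ z : H, f z - infH ≤ ‖f' z‖ ^ 2 / (2 * μ))
    (C : Set H) (minC : ℝ)
    (hminC : ∀ z ∈ C, minC ≤ f z) (hinf : infH ≤ minC)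
    (x g : H) (hg : g ≠ 0) (hgrad : f' x ≠ 0)
    (η γ : ℝ)
    (hη : η = (inner ℝ (-(f' x)) g : ℝ) / (‖f' x‖ * ‖g‖))
    (hγ : γ = η * ‖f' x‖ / (L * ‖g‖)) (hγ1 : γ ≤ 1)
    (hx : x ∈ C) (hxγ : x + γ • g ∈ C) :
    f (x + γ • g) - minC ≤ (1 - η ^ 2 * μ / L) * (f x - minC) := by
  have hA : (0:ℝ) < ‖f' x‖ := norm_pos_iff.mpr hgrad
  have hB : (0:ℝ) < ‖g‖ := norm_pos_iff.mpr hg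
  have hL' : L ≠ 0 := ne_of_gt hL
  have hip : (inner ℝ (f' x) g : ℝ) = -(η * ‖f' x‖ * ‖g‖) := by
    rw [hη, inner_neg_left]
    field_simp
  have h1 := hsmooth x (x + γ • g)
  rw [add_sub_cancel_left, inner_smul_right] at h1
  have hn : ‖γ • g‖ ^ 2 = γ ^ 2 * ‖g‖ ^ 2 := by
    rw [norm_smul, mul_pow, Real.norm_eq_abs, sq_abs]
  rw [hn, hip] at h1
  have hkey : γ * (L * ‖g‖) = η * ‖f' x‖ := by
    rw [hγ]; field_simp
  have e1 : γ * (η * ‖f' x‖ * ‖g‖) = γ ^ 2 * L * ‖g‖ ^ 2 := by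
    rw [← hkey]; ring
  have e2 : η ^ 2 * ‖f' x‖ ^ 2 = γ ^ 2 * L ^ 2 * ‖g‖ ^ 2 := by
    linear_combination (-(η * ‖f' x‖) - γ * L * ‖g‖) * hkey
  have hstep : f (x + γ • g) ≤ f x - η ^ 2 * ‖f' x‖ ^ 2 / (2 * L) := by
    have e3 : η ^ 2 * ‖f' x‖ ^ 2 / (2 * L) = γ ^ 2 * L * ‖g‖ ^ 2 / 2 := by
      rw [e2]; field_simp
    rw [e3]
    nlinarith [h1, e1]
  have h2 : f x - minC ≤ ‖f' x‖ ^ 2 / (2 * μ) := by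
    have := hdom x; linarith
  have h3 : 0 ≤ f x - minC := by linarith [hminC x hx]
  have h2' : (f x - minC) * (2 * μ) ≤ ‖f' x‖ ^ 2 := by
    rw [← le_div_iff₀ (by positivity)]; exact h2
  have h4 : η ^ 2 * μ / L * (f x - minC) ≤ η ^ 2 * ‖f' x‖ ^ 2 / (2 * L) := by
    rw [div_mul_eq_mul_div, div_le_div_iff₀ hL (by positivity)]
    nlinarith [mul_le_mul_of_nonneg_left h2' (by positivity : (0:ℝ) ≤ η ^ 2 * L)]
  nlinarith [hstep, h4]
end

section
/- Let f be L-smooth and convex on H, let C be a compact convex set of diameter D, let y ∈ C, and let x₀ ∈ C minimize v ↦ ⟨∇f(y), v⟩ over C. Then f(x₀) − min_C f ≤ LD²/2. -/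
/-- Initialization bound: if x₀ minimizes ⟨∇f(y),·⟩ over C, then the primal gap at
x₀ is at most LD²/2. -/
theorem initialization_gap_bound
    {H : Type*} [NormedAddCommGroup H] [InnerProductSpace ℝ H]
    (f : H → ℝ) (f' : H → H) (L D : ℝ) (hL : 0 < L)
    (hsmooth : ∀ a b : H, f b - f a - inner ℝ (f' a) (b - a) ≤ (L / 2) * ‖b - a‖ ^ 2)
    (hconv : ∀ a b : H, f b - f a - inner ℝ (f' a) (b - a) ≥ 0)
    (C : Set H) (hCcompact : IsCompact C) (hCconv : Convex ℝ C)
    (hD : ∀ a ∈ C, ∀ b ∈ C, ‖a - b‖ ≤ D)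
    (y : H) (hy : y ∈ C)
    (x₀ : H) (hx₀ : x₀ ∈ C)
    (hmin₀ : ∀ v ∈ C, (inner ℝ (f' y) x₀ : ℝ) ≤ inner ℝ (f' y) v)
    (xstar : H) (hxstar : xstar ∈ C) (hmin : ∀ z ∈ C, f xstar ≤ f z) :
    f x₀ - f xstar ≤ L * D ^ 2 / 2 := by
  have h1 := hsmooth y x₀
  have h2 := hconv y xstar
  have h3 : (inner ℝ (f' y) x₀ : ℝ) ≤ inner ℝ (f' y) xstar := hmin₀ xstar hxstar
  have hinner : (inner ℝ (f' y) (x₀ - y) : ℝ) ≤ inner ℝ (f' y) (xstar - y) := by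
    rw [inner_sub_right, inner_sub_right]; linarith
  have hnorm : ‖x₀ - y‖ ≤ D := hD x₀ hx₀ y hy
  have hDnn : (0:ℝ) ≤ D := le_trans (norm_nonneg _) hnorm
  have hsq : ‖x₀ - y‖ ^ 2 ≤ D ^ 2 := by
    apply pow_le_pow_left₀ (norm_nonneg _) hnorm
  nlinarith [norm_nonneg (x₀ - y)]
end

section
/- Let f be L-smooth and convex on H, C compact convex with diameter D, x ∈ C, x* ∈ argmin_C f, v ∈ argmin_{z∈C}⟨∇f(x), z⟩, and define the short step γ = min{⟨∇f(x), x − v⟩/(L‖x − v‖²), 1} (assume v ≠ x). Setting x⁺ = x + γ(v − x), then: if γ < 1 then f(x⁺) − f(x*) ≤ (f(x) − f(x*))(1 − (f(x) − f(x*))/(2LD²)); and if γ = 1 then f(x⁺) − f(x*) ≤ (f(x) − f(x*))/2. -/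
/-- Progress of a Frank-Wolfe short step. -/
theorem fw_short_step_progress
    {H : Type*} [NormedAddCommGroup H] [InnerProductSpace ℝ H]
    (f : H → ℝ) (f' : H → H) (L D : ℝ) (hL : 0 < L)
    (hsmooth : ∀ a b : H, f b - f a - inner ℝ (f' a) (b - a) ≤ (L / 2) * ‖b - a‖ ^ 2)
    (hconv : ∀ a b : H, f b - f a - inner ℝ (f' a) (b - a) ≥ 0)
    (C : Set H) (hCcompact : IsCompact C) (hCconv : Convex ℝ C)
    (hD : ∀ a ∈ C, ∀ b ∈ C, ‖a - b‖ ≤ D)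
    (x : H) (hx : x ∈ C)
    (xstar : H) (hxstar : xstar ∈ C) (hmin : ∀ z ∈ C, f xstar ≤ f z)
    (v : H) (hv : v ∈ C) (hvmin : ∀ z ∈ C, (inner ℝ (f' x) v : ℝ) ≤ inner ℝ (f' x) z)
    (hvx : v ≠ x)
    (γ : ℝ)
    (hγ : γ = min ((inner ℝ (f' x) (x - v) : ℝ) / (L * ‖x - v‖ ^ 2)) 1) :
    (γ < 1 →
      f (x + γ • (v - x)) - f xstar ≤
        (f x - f xstar) * (1 - (f x - f xstar) / (2 * L * D ^ 2))) ∧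
    (γ = 1 → f (x + γ • (v - x)) - f xstar ≤ (f x - f xstar) / 2) := by
  set g : ℝ := inner ℝ (f' x) (x - v) with hg
  have hxv : x - v ≠ 0 := sub_ne_zero_of_ne hvx.symm
  have hnormpos : (0:ℝ) < ‖x - v‖ := norm_pos_iff.mpr hxv
  have hn : (0:ℝ) < ‖x - v‖ ^ 2 := by positivity
  have hN : (0:ℝ) < L * ‖x - v‖ ^ 2 := mul_pos hL hn
  have hDpos : (0:ℝ) < D := lt_of_lt_of_le hnormpos (hD x hx v hv)
  have hnD : ‖x - v‖ ^ 2 ≤ D ^ 2 := by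
    have := hD x hx v hv
    nlinarith [norm_nonneg (x - v)]
  -- gap inequality
  have hgap : f x - f xstar ≤ g := by
    have h1 := hconv x xstar
    have h2 := hvmin xstar hxstar
    rw [hg, inner_sub_right]
    rw [inner_sub_right] at h1
    linarith
  have hh0 : 0 ≤ f x - f xstar := sub_nonneg.mpr (hmin x hx)
  have hg0 : 0 ≤ g := le_trans hh0 hgap
  -- smoothness inequality
  have key : f (x + γ • (v - x)) ≤ f x - γ * g + L / 2 * γ ^ 2 * ‖x - v‖ ^ 2 := by
    have hsm := hsmooth x (x + γ • (v - x))
    have e1 : x + γ • (v - x) - x = γ • (v - x) := by abel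
    rw [e1, real_inner_smul_right] at hsm
    have e2 : (inner ℝ (f' x) (v - x) : ℝ) = -g := by
      rw [hg, ← inner_neg_right]; congr 1; abel
    have e3 : ‖γ • (v - x)‖ ^ 2 = γ ^ 2 * ‖x - v‖ ^ 2 := by
      rw [norm_smul, norm_sub_rev, mul_pow, Real.norm_eq_abs, sq_abs]
    rw [e2, e3] at hsm
    nlinarith [hsm]
  constructor
  · intro hlt
    have hγeq : γ = g / (L * ‖x - v‖ ^ 2) := by
      rcases min_cases (g / (L * ‖x - v‖ ^ 2)) (1:ℝ) with ⟨h1, _⟩ | ⟨h1, h2⟩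
      · rw [hγ, h1]
      · rw [hγ, h1] at hlt; exact absurd hlt (lt_irrefl 1)
    have hstep : f (x + γ • (v - x)) ≤ f x - g ^ 2 / (2 * (L * ‖x - v‖ ^ 2)) := by
      rw [hγeq] at key ⊢
      have : (g / (L * ‖x - v‖ ^ 2)) * g = g ^ 2 / (L * ‖x - v‖ ^ 2) := by
        field_simp
      calc f (x + (g / (L * ‖x - v‖ ^ 2)) • (v - x))
          ≤ f x - (g / (L * ‖x - v‖ ^ 2)) * g
              + L / 2 * (g / (L * ‖x - v‖ ^ 2)) ^ 2 * ‖x - v‖ ^ 2 := key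
        _ = f x - g ^ 2 / (2 * (L * ‖x - v‖ ^ 2)) := by
            field_simp; ring
    have hcomp : (f x - f xstar) ^ 2 / (2 * L * D ^ 2) ≤
        g ^ 2 / (2 * (L * ‖x - v‖ ^ 2)) := by
      apply div_le_div₀ (by positivity)
      · nlinarith
      · positivity
      · nlinarith
    have hexp : (f x - f xstar) * (1 - (f x - f xstar) / (2 * L * D ^ 2))
        = (f x - f xstar) - (f x - f xstar) ^ 2 / (2 * L * D ^ 2) := by
      field_simp
    rw [hexp]
    linarith
  · intro heq
    have h1 : (1:ℝ) ≤ g / (L * ‖x - v‖ ^ 2) := by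
      by_contra h
      push_neg at h
      rw [hγ, min_eq_left h.le] at heq
      exact absurd heq (ne_of_lt h)
    have hNg : L * ‖x - v‖ ^ 2 ≤ g := (one_le_div hN).mp h1
    rw [heq] at key ⊢
    nlinarith [key]
end
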